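/- Under the hypotheses of the transformed Lyapunov identity XP⁻¹ - P⁻¹X = Ẽ*C̃ - C̃*Ẽ (with P invertible Hermitian, X real diagonal with distinct entries, Ẽ = EP⁻¹, C̃ = CP⁻¹), if additionally every entry of E is either 0 or 1 and whenever e_i = 0 the corresponding entry c_i of C is nonzero, then for each index i, |ẽ_i| + |c̃_i| > 0, i.e., ẽ_i and c̃_i cannot both vanish. -/

import Mathlib

open scoped Matrix


theorem stmt_11 (n : ℕ) (P : Matrix (Fin n) (Fin n) ℂ) (hP : P.IsHermitian)
    (hPu : IsUnit P) (x : Fin n → ℝ) (hx : Function.Injective x)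
    (E C : Fin n → ℂ) (hE01 : ∀ i, E i = 0 ∨ E i = 1)
    (hEC : ∀ i, E i = 0 → C i ≠ 0)
    (hLyap : P * Matrix.diagonal (fun i => (x i : ℂ)) -
        Matrix.diagonal (fun i => (x i : ℂ)) * P =
      Matrix.of fun i j => star (E i) * C j - star (C i) * E j) :
    ∀ i, 0 < ‖Matrix.vecMul E P⁻¹ i‖ + ‖Matrix.vecMul C P⁻¹ i‖ := by
  intro i
  by_contra h
  push_neg at h
  have hEa := norm_nonneg (Matrix.vecMul E P⁻¹ i)
  have hCa := norm_nonneg (Matrix.vecMul C P⁻¹ i)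
  have hE0 : Matrix.vecMul E P⁻¹ i = 0 := by
    have : ‖Matrix.vecMul E P⁻¹ i‖ = 0 := by linarith
    exact norm_eq_zero.mp this
  have hC0 : Matrix.vecMul C P⁻¹ i = 0 := by
    have : ‖Matrix.vecMul C P⁻¹ i‖ = 0 := by linarith
    exact norm_eq_zero.mp this
  set X : Matrix (Fin n) (Fin n) ℂ := Matrix.diagonal (fun i => (x i : ℂ)) with hX
  set w : Fin n → ℂ := fun j => P⁻¹ j i with hw
  have hdet : IsUnit P.det := (Matrix.isUnit_iff_isUnit_det P).mp hPu
  have hPP : P * P⁻¹ = 1 := Matrix.mul_nonsing_inv P hdet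
  have hPPi : P⁻¹ * P = 1 := Matrix.nonsing_inv_mul P hdet
  have hE' : ∑ j, E j * w j = 0 := by
    simpa [Matrix.vecMul, dotProduct, hw] using hE0
  have hC' : ∑ j, C j * w j = 0 := by
    simpa [Matrix.vecMul, dotProduct, hw] using hC0
  have hPw : P *ᵥ w = Pi.single i 1 := by
    funext j
    have := congrFun (congrFun hPP j) i
    simp only [Matrix.mul_apply, Matrix.one_apply] at this
    simp [Matrix.mulVec, dotProduct, hw, this, Pi.single_apply]
  have hzero : (P * X - X * P) *ᵥ w = 0 := by
    rw [hLyap]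
    funext j
    simp only [Matrix.mulVec, dotProduct, Matrix.of_apply, Pi.zero_apply]
    calc ∑ k, (star (E j) * C k - star (C j) * E k) * w k
        = star (E j) * (∑ k, C k * w k) - star (C j) * (∑ k, E k * w k) := by
          rw [Finset.mul_sum, Finset.mul_sum, ← Finset.sum_sub_distrib]
          congr 1; funext k; ring
      _ = 0 := by rw [hE', hC']; ring
  have h1 : P *ᵥ (X *ᵥ w) = X *ᵥ (P *ᵥ w) := by
    have := hzero
    rw [Matrix.sub_mulVec, sub_eq_zero, ← Matrix.mulVec_mulVec, ← Matrix.mulVec_mulVec] at this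
    exact this
  have h2 : X *ᵥ (P *ᵥ w) = P *ᵥ ((x i : ℂ) • w) := by
    rw [hPw, Matrix.mulVec_smul]
    funext j
    rcases eq_or_ne j i with rfl | hji
    · simp [hX, hPw, Matrix.mulVec_diagonal]
    · simp [hX, Matrix.mulVec_diagonal, Pi.single_apply, hji, hPw]
  have h3 : X *ᵥ w = (x i : ℂ) • w := by
    have := h1.trans h2
    have h4 := congrArg (fun v => P⁻¹ *ᵥ v) this
    simpa [Matrix.mulVec_mulVec, ← Matrix.mul_assoc, hPPi] using h4
  have hwj : ∀ j, j ≠ i → w j = 0 := by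
    intro j hji
    have := congrFun h3 j
    simp only [Matrix.mulVec_diagonal, Pi.smul_apply, smul_eq_mul, hX] at this
    have hxne : (x j : ℂ) ≠ (x i : ℂ) := by
      exact_mod_cast fun hc => hji (hx (by exact_mod_cast hc))
    have : ((x j : ℂ) - (x i : ℂ)) * w j = 0 := by ring_nf; linear_combination this
    rcases mul_eq_zero.mp this with h5 | h5
    · exact absurd (sub_eq_zero.mp h5) hxne
    · exact h5
  have hwi : w i ≠ 0 := by
    intro hwi0
    have := congrFun hPw i
    simp only [Matrix.mulVec, dotProduct, Pi.single_apply, if_pos rfl] at this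
    have hsum : ∑ k, P i k * w k = 0 := by
      apply Finset.sum_eq_zero
      intro k _
      rcases eq_or_ne k i with rfl | hki
      · rw [hwi0, mul_zero]
      · rw [hwj k hki, mul_zero]
    rw [hsum] at this
    exact one_ne_zero this.symm
  have hEi : E i * w i = 0 := by
    rw [← hE']
    rw [Finset.sum_eq_single i (fun k _ hk => by rw [hwj k hk, mul_zero]) (by simp)]
  have hCi : C i * w i = 0 := by
    rw [← hC']
    rw [Finset.sum_eq_single i (fun k _ hk => by rw [hwj k hk, mul_zero]) (by simp)]
  have hEi0 : E i = 0 := by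
    rcases mul_eq_zero.mp hEi with h5 | h5
    · exact h5
    · exact absurd h5 hwi
  have hCi0 : C i = 0 := by
    rcases mul_eq_zero.mp hCi with h5 | h5
    · exact h5
    · exact absurd h5 hwi
  exact hEC i hEi0 hCi0
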